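/- If f : ℝⁿ_{≥0} → ℝⁿ_{≥0} is an m-topical map that is subadditive (f(x+y) ≤ f(x)+f(y) entrywise for all x, y ∈ ℝⁿ_{≥0}), then f is multiplicatively convex: for all x, y ∈ ℝⁿ_{>0} and all 0 < λ < 1, f(x^λ y^{1−λ}) ≤ f(x)^λ f(y)^{1−λ}, where products and powers of vectors are taken entrywise. -/

import Mathlib

open Filter Set

/-- Vectors in ℝⁿ indexed by `Fin n`. -/
abbrev Vec (n : ℕ) := Fin n → ℝ

/-- Entrywise nonnegative vector: an element of ℝⁿ_{≥0}. -/
def Nonneg {n : ℕ} (x : Vec n) : Prop := ∀ i, 0 ≤ x i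

/-- Entrywise positive vector: an element of ℝⁿ_{>0}. -/
def Pos {n : ℕ} (x : Vec n) : Prop := ∀ i, 0 < x i

/-- An m-topical map: continuous on ℝⁿ_{≥0}, preserving ℝⁿ_{≥0}, order-preserving,
homogeneous of degree one, and mapping the interior ℝⁿ_{>0} into itself. -/
structure IsMTopical {n : ℕ} (f : Vec n → Vec n) : Prop where
  map_nonneg : ∀ x, Nonneg x → Nonneg (f x)
  contOn : ContinuousOn f {x : Vec n | Nonneg x}
  mono : ∀ x y, Nonneg x → Nonneg y → x ≤ y → f x ≤ f y
  hom : ∀ c : ℝ, 0 < c → ∀ x, Nonneg x → f (c • x) = c • f x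
  map_pos : ∀ x, Pos x → Pos (f x)

/-- The indicator vector `e_J` of a subset `J ⊆ [n]`. -/
noncomputable def eVec {n : ℕ} (J : Set (Fin n)) : Vec n := J.indicator fun _ => 1

/-- The all-ones vector `𝟙`. -/
def allOnes (n : ℕ) : Vec n := fun _ => 1
/-- Subadditive m-topical maps are multiplicatively convex. -/
theorem subadditive_mTopical_mConvex {n : ℕ} (hn : 0 < n) (f : Vec n → Vec n)
    (hf : IsMTopical f)
    (hsub : ∀ x y : Vec n, Nonneg x → Nonneg y → f (x + y) ≤ f x + f y) :
    ∀ x y : Vec n, Pos x → Pos y → ∀ l : ℝ, 0 < l → l < 1 →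
      ∀ i, f (fun j => x j ^ l * y j ^ (1 - l)) i ≤ f x i ^ l * f y i ^ (1 - l) := by
  intro x y hx hy l hl hl1 i
  have hx0 : Nonneg x := fun j => (hx j).le
  have hy0 : Nonneg y := fun j => (hy j).le
  have hl1' : 0 < 1 - l := by linarith
  have ha : 0 < f x i := hf.map_pos x hx i
  have hb : 0 < f y i := hf.map_pos y hy i
  set a := f x i with hadef
  set b := f y i with hbdef
  set t : ℝ := b / a with htdef
  have ht0 : 0 < t := div_pos hb ha
  set c1 : ℝ := l * t ^ (1 - l) with hc1def
  set c2 : ℝ := (1 - l) * t ^ (-l) with hc2def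
  have hc1 : 0 < c1 := mul_pos hl (Real.rpow_pos_of_pos ht0 _)
  have hc2 : 0 < c2 := mul_pos hl1' (Real.rpow_pos_of_pos ht0 _)
  set z : Vec n := fun j => x j ^ l * y j ^ (1 - l) with hzdef
  have hznn : Nonneg z := fun j =>
    mul_nonneg (Real.rpow_nonneg (hx j).le _) (Real.rpow_nonneg (hy j).le _)
  have hw1nn : Nonneg (c1 • x) := fun j => mul_nonneg hc1.le (hx j).le
  have hw2nn : Nonneg (c2 • y) := fun j => mul_nonneg hc2.le (hy j).le
  have hwnn : Nonneg (c1 • x + c2 • y) := fun j => add_nonneg (hw1nn j) (hw2nn j)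
  -- entrywise AM-GM bound
  have hz_le : z ≤ c1 • x + c2 • y := by
    intro j
    have key : z j = (t ^ (1 - l) * x j) ^ l * (t ^ (-l) * y j) ^ (1 - l) := by
      rw [Real.mul_rpow (Real.rpow_nonneg ht0.le _) (hx j).le,
          Real.mul_rpow (Real.rpow_nonneg ht0.le _) (hy j).le,
          ← Real.rpow_mul ht0.le, ← Real.rpow_mul ht0.le]
      have hpow : t ^ ((1 - l) * l) * t ^ (-l * (1 - l)) = 1 := by
        rw [← Real.rpow_add ht0, show (1 - l) * l + -l * (1 - l) = 0 by ring,
          Real.rpow_zero]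
      calc z j = (t ^ ((1 - l) * l) * t ^ (-l * (1 - l))) * (x j ^ l * y j ^ (1 - l)) := by
            rw [hpow]; simp [hzdef]
        _ = t ^ ((1 - l) * l) * x j ^ l * (t ^ (-l * (1 - l)) * y j ^ (1 - l)) := by ring
    rw [key]
    calc (t ^ (1 - l) * x j) ^ l * (t ^ (-l) * y j) ^ (1 - l)
        ≤ l * (t ^ (1 - l) * x j) + (1 - l) * (t ^ (-l) * y j) :=
          Real.geom_mean_le_arith_mean2_weighted hl.le hl1'.le
            (mul_nonneg (Real.rpow_nonneg ht0.le _) (hx j).le)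
            (mul_nonneg (Real.rpow_nonneg ht0.le _) (hy j).le) (by ring)
      _ = (c1 • x + c2 • y) j := by simp [hc1def, hc2def]; ring
  have step1 : f z i ≤ f (c1 • x + c2 • y) i := hf.mono _ _ hznn hwnn hz_le i
  have step2 : f (c1 • x + c2 • y) i ≤ f (c1 • x) i + f (c2 • y) i :=
    hsub _ _ hw1nn hw2nn i
  have step3 : f (c1 • x) i = c1 * a := by rw [hf.hom c1 hc1 x hx0]; rfl
  have step4 : f (c2 • y) i = c2 * b := by rw [hf.hom c2 hc2 y hy0]; rfl
  have final : c1 * a + c2 * b = a ^ l * b ^ (1 - l) := by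
    have h1 : t ^ (1 - l) * a = a ^ l * b ^ (1 - l) := by
      rw [htdef, Real.div_rpow hb.le ha.le]
      rw [div_mul_eq_mul_div, div_eq_iff (by positivity)]
      rw [show a ^ l * b ^ (1 - l) * a ^ (1 - l) = b ^ (1 - l) * (a ^ l * a ^ (1 - l)) by ring,
        ← Real.rpow_add ha, show l + (1 - l) = (1 : ℝ) by ring, Real.rpow_one]
    have h2 : t ^ (-l) * b = a ^ l * b ^ (1 - l) := by
      rw [htdef, Real.div_rpow hb.le ha.le]
      rw [div_mul_eq_mul_div, div_eq_iff (by positivity)]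
      rw [Real.rpow_neg ha.le, Real.rpow_neg hb.le]
      field_simp
      rw [← Real.rpow_add hb, show l + (1 - l) = (1 : ℝ) by ring, Real.rpow_one]
    rw [hc1def, hc2def, mul_assoc, mul_assoc, h1, h2]; ring
  calc f z i ≤ f (c1 • x) i + f (c2 • y) i := step1.trans step2
    _ = a ^ l * b ^ (1 - l) := by rw [step3, step4, final]
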